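/- Let F(t) = Σ_{j=0}^{d} N(j) t^j be a real polynomial with nonnegative coefficients, all of whose zeros have negative real part (or F is a nonzero constant). Then N(j)·N(j+1) ≥ N(j−1)·N(j+2) for all 1 ≤ j ≤ d−2. -/
import Mathlib

open Polynomial

namespace HurwitzAux

/-- nonnegativity from the pos/zero structure -/
lemma seq_nonneg {a : ℕ → ℝ} {n : ℕ} (hpos : ∀ i ≤ n, 0 < a i)
    (hz : ∀ i, n < i → a i = 0) : ∀ i, 0 ≤ a i := by
  intro i
  by_cases h : i ≤ n
  · exact (hpos i h).le
  · rw [hz i (not_le.mp h)]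

/-- even gap-2 inequality derived from the adjacent one -/
lemma seqE2 {a : ℕ → ℝ} {n : ℕ} (hpos : ∀ i ≤ n, 0 < a i)
    (hz : ∀ i, n < i → a i = 0)
    (hP : ∀ j, a j * a (j + 3) ≤ a (j + 1) * a (j + 2)) :
    ∀ j, a j * a (j + 4) ≤ a (j + 2) * a (j + 2) := by
  intro j
  have hnn := seq_nonneg hpos hz
  by_cases h : j + 4 ≤ n
  · have p1 := hP j
    have p2 := hP (j + 1)
    have h1 : 0 < a (j + 1) := hpos _ (by omega)
    have h3 : 0 < a (j + 3) := hpos _ (by omega)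
    have key : (a j * a (j + 3)) * (a (j + 1) * a (j + 1 + 3)) ≤
        (a (j + 1) * a (j + 2)) * (a (j + 1 + 1) * a (j + 1 + 2)) :=
      mul_le_mul p1 p2 (mul_nonneg (hnn _) (hnn _)) (mul_nonneg (hnn _) (hnn _))
    have h13 : 0 < a (j + 1) * a (j + 3) := mul_pos h1 h3
    nlinarith [key, h13, hnn j, hnn (j + 4), hnn (j + 2)]
  · have : a (j + 4) = 0 := hz _ (by omega)
    rw [this, mul_zero]
    exact mul_nonneg (hnn _) (hnn _)

/-- odd gap-3 inequality derived from the adjacent one -/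
lemma seqO5 {a : ℕ → ℝ} {n : ℕ} (hpos : ∀ i ≤ n, 0 < a i)
    (hz : ∀ i, n < i → a i = 0)
    (hP : ∀ j, a j * a (j + 3) ≤ a (j + 1) * a (j + 2)) :
    ∀ j, a j * a (j + 5) ≤ a (j + 1) * a (j + 4) := by
  intro j
  have hnn := seq_nonneg hpos hz
  by_cases h : j + 5 ≤ n
  · have p1 := hP j
    have p2 := hP (j + 2)
    have h2 : 0 < a (j + 2) := hpos _ (by omega)
    have h3 : 0 < a (j + 3) := hpos _ (by omega)
    have key : (a j * a (j + 3)) * (a (j + 2) * a (j + 2 + 3)) ≤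
        (a (j + 1) * a (j + 2)) * (a (j + 2 + 1) * a (j + 2 + 2)) :=
      mul_le_mul p1 p2 (mul_nonneg (hnn _) (hnn _)) (mul_nonneg (hnn _) (hnn _))
    have h23 : 0 < a (j + 2) * a (j + 3) := mul_pos h2 h3
    nlinarith [key, h23, hnn j, hnn (j + 5), hnn (j + 1), hnn (j + 4)]
  · have : a (j + 5) = 0 := hz _ (by omega)
    rw [this, mul_zero]
    exact mul_nonneg (hnn _) (hnn _)

/-- multiplication by a linear factor `X + s`, `s > 0`, preserves the invariant -/
lemma seqLin {a : ℕ → ℝ} {n : ℕ} (hpos : ∀ i ≤ n, 0 < a i)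
    (hz : ∀ i, n < i → a i = 0)
    (hP : ∀ j, a j * a (j + 3) ≤ a (j + 1) * a (j + 2))
    {s : ℝ} (hs : 0 < s) {A : ℕ → ℝ}
    (hA0 : A 0 = s * a 0) (hAS : ∀ k, A (k + 1) = s * a (k + 1) + a k) :
    (∀ i ≤ n + 1, 0 < A i) ∧ (∀ i, n + 1 < i → A i = 0) ∧
      (∀ j, A j * A (j + 3) ≤ A (j + 1) * A (j + 2)) := by
  have hnn := seq_nonneg hpos hz
  refine ⟨?_, ?_, ?_⟩
  · intro i hi
    cases i with
    | zero => rw [hA0]; exact mul_pos hs (hpos 0 (by omega))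
    | succ k =>
      rw [hAS]
      have hk : 0 < a k := hpos k (by omega)
      have := hnn (k + 1)
      nlinarith
  · intro i hi
    cases i with
    | zero => omega
    | succ k =>
      rw [hAS, hz k (by omega), hz (k + 1) (by omega)]
      ring
  · intro j
    cases j with
    | zero =>
      rw [hA0, hAS 0, hAS 1, hAS 2]
      have p0 := hP 0
      have := hnn 0; have := hnn 1; have := hnn 2; have := hnn 3
      nlinarith [mul_le_mul_of_nonneg_left p0 (le_of_lt (mul_pos hs hs)),
        mul_nonneg hs.le (mul_self_nonneg (a 1)), mul_nonneg (hnn 0) (hnn 1)]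
    | succ k =>
      rw [hAS k, hAS (k + 1), hAS (k + 2), show k + 1 + 3 = (k + 3) + 1 by ring,
        hAS (k + 3)]
      have p1 := hP (k + 1)
      have p0 := hP k
      have e0 := seqE2 hpos hz hP k
      have := hnn k; have := hnn (k + 1); have := hnn (k + 2)
      have := hnn (k + 3); have := hnn (k + 4)
      nlinarith [mul_le_mul_of_nonneg_left p1 (le_of_lt (mul_pos hs hs)),
        mul_le_mul_of_nonneg_left e0 hs.le, p0]

/-- multiplication by a quadratic factor `X^2 + b X + c`, `b, c > 0`,
preserves the invariant -/
lemma seqQuad {a : ℕ → ℝ} {n : ℕ} (hpos : ∀ i ≤ n, 0 < a i)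
    (hz : ∀ i, n < i → a i = 0)
    (hP : ∀ j, a j * a (j + 3) ≤ a (j + 1) * a (j + 2))
    {b c : ℝ} (hb : 0 < b) (hc : 0 < c) {A : ℕ → ℝ}
    (hA0 : A 0 = c * a 0) (hA1 : A 1 = c * a 1 + b * a 0)
    (hAS : ∀ k, A (k + 2) = c * a (k + 2) + b * a (k + 1) + a k) :
    (∀ i ≤ n + 2, 0 < A i) ∧ (∀ i, n + 2 < i → A i = 0) ∧
      (∀ j, A j * A (j + 3) ≤ A (j + 1) * A (j + 2)) := by
  have hnn := seq_nonneg hpos hz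
  have h0 : 0 < a 0 := hpos 0 (by omega)
  refine ⟨?_, ?_, ?_⟩
  · intro i hi
    match i with
    | 0 => rw [hA0]; exact mul_pos hc h0
    | 1 =>
      rw [hA1]
      have := hnn 1
      nlinarith [mul_pos hb h0]
    | (k + 2) =>
      rw [hAS]
      have hk : 0 < a k := hpos k (by omega)
      have := hnn (k + 1); have := hnn (k + 2)
      nlinarith
  · intro i hi
    match i with
    | 0 => omega
    | 1 => omega
    | (k + 2) =>
      rw [hAS, hz k (by omega), hz (k + 1) (by omega), hz (k + 2) (by omega)]
      ring
  · intro j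
    match j with
    | 0 =>
      rw [hA0, hA1, show (0:ℕ) + 3 = 1 + 2 by rfl, hAS 0, hAS 1]
      have p0 := hP 0
      have := hnn 0; have := hnn 1; have := hnn 2; have := hnn 3
      nlinarith [mul_le_mul_of_nonneg_left p0 (le_of_lt (mul_pos hc hc)),
        mul_pos hb hc, mul_pos hb hb, hb.le, hc.le,
        mul_nonneg (mul_nonneg hb.le hc.le) (mul_self_nonneg (a 1)),
        mul_nonneg (mul_nonneg hb.le hb.le) (mul_nonneg (hnn 0) (hnn 1)),
        mul_nonneg hb.le (mul_self_nonneg (a 0))]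
    | 1 =>
      rw [hA1, show (1:ℕ) + 3 = 2 + 2 by rfl, hAS 0, hAS 1, hAS 2]
      have p0 := hP 0
      have p1 := hP 1
      have e0 := seqE2 hpos hz hP 0
      have := hnn 0; have := hnn 1; have := hnn 2; have := hnn 3; have := hnn 4
      nlinarith [mul_le_mul_of_nonneg_left p1 (le_of_lt (mul_pos hc hc)),
        mul_le_mul_of_nonneg_left e0 (le_of_lt (mul_pos hb hc)),
        mul_le_mul_of_nonneg_left p0 (le_of_lt (mul_pos hb hb)),
        mul_nonneg hc.le (mul_nonneg (hnn 0) (hnn 3)),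
        mul_nonneg hb.le (mul_self_nonneg (a 1)),
        mul_nonneg (hnn 0) (hnn 1)]
    | (k + 2) =>
      rw [hAS k, hAS (k + 1), show k + 2 + 3 = (k + 3) + 2 by ring, hAS (k + 3),
        show k + 2 + 1 = (k + 1) + 2 by ring, show k + 2 + 2 = (k + 2) + 2 by ring,
        hAS (k + 2)]
      have t1 := hP (k + 2)
      have t2 := seqE2 hpos hz hP (k + 1)
      have t3 := seqO5 hpos hz hP k
      have t4 := hP (k + 1)
      have t5 := seqE2 hpos hz hP k
      have t6 := hP k
      nlinarith [mul_le_mul_of_nonneg_left t1 (le_of_lt (mul_pos hc hc)),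
        mul_le_mul_of_nonneg_left t2 (le_of_lt (mul_pos hb hc)),
        mul_le_mul_of_nonneg_left t3 hc.le,
        mul_le_mul_of_nonneg_left t4 (le_of_lt (mul_pos hb hb)),
        mul_le_mul_of_nonneg_left t5 hb.le, t6]

/-- Main structural lemma: a Hurwitz-stable real polynomial with positive leading
coefficient has positive coefficients and satisfies the Hurwitz 2×2 minor
inequalities. -/
lemma main : ∀ n : ℕ, ∀ F : Polynomial ℝ, F.natDegree = n → F ≠ 0 →
    0 < F.leadingCoeff → (∀ z : ℂ, Polynomial.aeval z F = 0 → z.re < 0) →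
    (∀ i ≤ F.natDegree, 0 < F.coeff i) ∧
      (∀ j, F.coeff j * F.coeff (j + 3) ≤ F.coeff (j + 1) * F.coeff (j + 2)) := by
  intro n
  induction n using Nat.strong_induction_on with
  | _ n ih =>
    intro F hFn hF0 hlead hstable
    rcases Nat.eq_zero_or_pos n with hn | hn
    · -- constant case
      subst hn
      have hc0 : 0 < F.coeff 0 := by
        rwa [Polynomial.leadingCoeff, hFn] at hlead
      constructor
      · intro i hi
        rw [hFn] at hi
        interval_cases i
        exact hc0
      · intro j
        have h3 : F.coeff (j + 3) = 0 :=
          Polynomial.coeff_eq_zero_of_natDegree_lt (by omega)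
        rw [h3, mul_zero]
        have nn : ∀ k, 0 ≤ F.coeff k := by
          intro k
          rcases Nat.eq_zero_or_pos k with rfl | hk
          · exact hc0.le
          · rw [Polynomial.coeff_eq_zero_of_natDegree_lt (by omega)]
        exact mul_nonneg (nn _) (nn _)
    · -- there is a complex root
      have hdegpos : 0 < F.degree := by
        rw [Polynomial.degree_eq_natDegree hF0, hFn]
        exact_mod_cast hn
      have hmapne : F.map (algebraMap ℝ ℂ) ≠ 0 := by
        simpa using (Polynomial.map_ne_zero_iff
          (algebraMap ℝ ℂ).injective).mpr hF0
      have hdeg' : 0 < (F.map (algebraMap ℝ ℂ)).degree := by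
        rw [Polynomial.degree_map_eq_of_injective (algebraMap ℝ ℂ).injective]
        exact hdegpos
      obtain ⟨z, hz⟩ := Complex.exists_root hdeg'
      have hroot : Polynomial.aeval z F = 0 := by
        rw [Polynomial.aeval_def, ← Polynomial.eval_map]
        exact hz
      have hre : z.re < 0 := hstable z hroot
      by_cases him : z.im = 0
      · -- real root case
        set r := z.re with hr
        have hzr : z = (r : ℂ) := Complex.ext rfl (by simp [him])
        have hevalr : F.eval r = 0 := by
          have : Polynomial.aeval ((r : ℂ)) F = 0 := by rwa [hzr] at hroot
          rw [Polynomial.aeval_def] at this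
          have h2 : (algebraMap ℝ ℂ) r = (r : ℂ) := rfl
          rw [← h2, Polynomial.eval₂_at_apply] at this
          exact Complex.ofReal_eq_zero.mp this
        obtain ⟨G, hG⟩ := Polynomial.dvd_iff_isRoot.mpr hevalr
        have hG0 : G ≠ 0 := by
          intro h
          rw [h, mul_zero] at hG
          exact hF0 hG
        have hdegG : F.natDegree = G.natDegree + 1 := by
          rw [hG, Polynomial.natDegree_mul (Polynomial.X_sub_C_ne_zero r) hG0,
            Polynomial.natDegree_X_sub_C]
          omega
        have hleadG : 0 < G.leadingCoeff := by
          have : F.leadingCoeff = G.leadingCoeff := by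
            rw [hG, Polynomial.leadingCoeff_mul,
              (Polynomial.monic_X_sub_C r).leadingCoeff, one_mul]
          rwa [this] at hlead
        have hstabG : ∀ w : ℂ, Polynomial.aeval w G = 0 → w.re < 0 := by
          intro w hw
          apply hstable
          rw [hG, map_mul, hw, mul_zero]
        obtain ⟨hGpos, hGP⟩ := ih G.natDegree (by omega) G rfl hG0 hleadG hstabG
        set s : ℝ := -r with hs_def
        have hs : 0 < s := by simp [hs_def]; linarith
        have hXC : X - C r = X + C s := by
          rw [hs_def, map_neg, sub_eq_add_neg]
        have hA0 : F.coeff 0 = s * G.coeff 0 := by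
          rw [hG, hXC, Polynomial.mul_coeff_zero]
          simp
        have hAS : ∀ k, F.coeff (k + 1) = s * G.coeff (k + 1) + G.coeff k := by
          intro k
          rw [hG, hXC, add_mul, Polynomial.coeff_add, Polynomial.coeff_X_mul,
            Polynomial.coeff_C_mul]
          ring
        obtain ⟨h1, h2, h3⟩ := seqLin hGpos
          (fun i hi => Polynomial.coeff_eq_zero_of_natDegree_lt hi) hGP hs hA0 hAS
        refine ⟨?_, h3⟩
        intro i hi
        exact h1 i (by omega)
      · -- complex conjugate pair case
        obtain ⟨G, hG⟩ := F.quadratic_dvd_of_aeval_eq_zero_im_ne_zero hroot him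
        set b : ℝ := -(2 * z.re) with hb_def
        set c : ℝ := ‖z‖ ^ 2 with hc_def
        have hb : 0 < b := by simp [hb_def]; linarith
        have hc : 0 < c := by
          rw [hc_def]
          have hz0 : z ≠ 0 := fun h => him (by simp [h])
          exact pow_pos (norm_pos_iff.mpr hz0) 2
        have hq : X ^ 2 - C (2 * z.re) * X + C (‖z‖ ^ 2) =
            C 1 * X ^ 2 + C b * X + C c := by
          rw [hb_def, map_neg, map_one, one_mul]
          ring
        rw [hq] at hG
        set q : Polynomial ℝ := C 1 * X ^ 2 + C b * X + C c with hq_def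
        have hqmonic : q.leadingCoeff = 1 :=
          Polynomial.leadingCoeff_quadratic one_ne_zero
        have hqdeg : q.natDegree = 2 := Polynomial.natDegree_quadratic one_ne_zero
        have hq0 : q ≠ 0 := by
          intro h
          rw [h] at hqmonic
          simp at hqmonic
        have hG0 : G ≠ 0 := by
          intro h
          rw [h, mul_zero] at hG
          exact hF0 hG
        have hdegG : F.natDegree = G.natDegree + 2 := by
          rw [hG, Polynomial.natDegree_mul hq0 hG0, hqdeg]
          omega
        have hleadG : 0 < G.leadingCoeff := by
          have : F.leadingCoeff = G.leadingCoeff := by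
            rw [hG, Polynomial.leadingCoeff_mul, hqmonic, one_mul]
          rwa [this] at hlead
        have hstabG : ∀ w : ℂ, Polynomial.aeval w G = 0 → w.re < 0 := by
          intro w hw
          apply hstable
          rw [hG, map_mul, hw, mul_zero]
        obtain ⟨hGpos, hGP⟩ := ih G.natDegree (by omega) G rfl hG0 hleadG hstabG
        have hqexp : q * G = X * (X * G) + (C b * (X * G) + C c * G) := by
          rw [hq_def]; simp only [map_one, one_mul]; ring
        have hA0 : F.coeff 0 = c * G.coeff 0 := by
          rw [hG, hqexp]
          simp [Polynomial.mul_coeff_zero]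
        have hA1 : F.coeff 1 = c * G.coeff 1 + b * G.coeff 0 := by
          rw [hG, hqexp, Polynomial.coeff_add, Polynomial.coeff_add,
            Polynomial.coeff_X_mul, Polynomial.coeff_C_mul,
            Polynomial.coeff_C_mul, Polynomial.coeff_X_mul,
            Polynomial.mul_coeff_zero]
          simp
          ring
        have hAS : ∀ k, F.coeff (k + 2) =
            c * G.coeff (k + 2) + b * G.coeff (k + 1) + G.coeff k := by
          intro k
          rw [hG, hqexp, Polynomial.coeff_add, Polynomial.coeff_add,
            show k + 2 = (k + 1) + 1 by ring, Polynomial.coeff_X_mul,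
            Polynomial.coeff_X_mul, Polynomial.coeff_C_mul,
            Polynomial.coeff_C_mul, Polynomial.coeff_X_mul]
          ring
        obtain ⟨h1, h2, h3⟩ := seqQuad hGpos
          (fun i hi => Polynomial.coeff_eq_zero_of_natDegree_lt hi) hGP hb hc
          hA0 hA1 hAS
        refine ⟨?_, h3⟩
        intro i hi
        exact h1 i (by omega)

end HurwitzAux

theorem hurwitz_stable_coeff_inequalities (d : ℕ) (F : Polynomial ℝ)
    (hdeg : F.natDegree ≤ d) (hF : F ≠ 0)
    (hnonneg : ∀ j, 0 ≤ F.coeff j)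
    (hstable : ∀ z : ℂ, Polynomial.aeval z F = 0 → z.re < 0) :
    ∀ j : ℕ, 1 ≤ j → j ≤ d - 2 →
      F.coeff (j - 1) * F.coeff (j + 2) ≤ F.coeff j * F.coeff (j + 1) := by
  have hlead : 0 < F.leadingCoeff := by
    rcases lt_or_eq_of_le (hnonneg F.natDegree) with h | h
    · exact h
    · exact absurd h.symm (Polynomial.leadingCoeff_ne_zero.mpr hF)
  obtain ⟨-, hP⟩ := HurwitzAux.main F.natDegree F rfl hF hlead hstable
  intro j hj _
  obtain ⟨k, rfl⟩ := Nat.exists_eq_add_of_le hj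
  have := hP k
  simpa [Nat.add_sub_cancel, add_comm, add_assoc, add_left_comm,
    show 1 + k - 1 = k by omega, show 1 + k + 2 = k + 3 by omega,
    show 1 + k + 1 = k + 2 by omega, show 1 + k = k + 1 by omega] using this
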